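/- Let α and β be orientation-preserving homeomorphisms of the circle S¹ such that the fixed-point sets Fix(α) and Fix(β) are finite, nonempty, and disjoint, and such that every fixed point of α and every fixed point of β is either attracting or repelling (i.e., α and β act with multi sink-source dynamics). Let p ∈ S¹, and let I ⊆ S¹ be a nonempty open arc containing at least one fixed point of α and at least one fixed point of β. Then there exists an element g of the subgroup of the homeomorphism group of S¹ generated by α and β such that g(p) ∈ I. -/

import Mathlib

open Filter Topology

/-- `(a,b,c)` is a positively oriented triple on the circle `ℝ/ℤ`:
`b` lies in the open arc traversed counterclockwise from `a` to `c`. -/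
def PosOriented (a b c : UnitAddCircle) : Prop :=
  ∃ x y z : ℝ, (x : UnitAddCircle) = a ∧ (y : UnitAddCircle) = b ∧
    (z : UnitAddCircle) = c ∧ x < y ∧ y < z ∧ z < x + 1

/-- Negatively oriented triple. -/
def NegOriented (a b c : UnitAddCircle) : Prop := PosOriented c b a

/-- The open arc traversed counterclockwise from `a` to `b`. -/
def Arc (a b : UnitAddCircle) : Set UnitAddCircle := {x | PosOriented a x b}

/-- A homeomorphism of the circle is orientation-preserving if it sends every
positively oriented triple to a positively oriented triple. -/
def OrientationPreserving (h : UnitAddCircle ≃ₜ UnitAddCircle) : Prop :=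
  ∀ a b c : UnitAddCircle, PosOriented a b c → PosOriented (h a) (h b) (h c)

/-- The fixed point set of a circle homeomorphism. -/
def FixSet (h : UnitAddCircle ≃ₜ UnitAddCircle) : Set UnitAddCircle := {x | h x = x}

/-- `x` is an attracting fixed point (a sink) of `h`. -/
def IsAttractingFix (h : UnitAddCircle ≃ₜ UnitAddCircle) (x : UnitAddCircle) : Prop :=
  h x = x ∧ ∃ U : Set UnitAddCircle, IsOpen U ∧ x ∈ U ∧
    ∀ y ∈ U, Tendsto (fun n => (⇑h)^[n] y) atTop (𝓝 x)

/-- `x` is a repelling fixed point (a source) of `h`. -/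
def IsRepellingFix (h : UnitAddCircle ≃ₜ UnitAddCircle) (x : UnitAddCircle) : Prop :=
  IsAttractingFix h.symm x

/-- A map of the circle is monotone on a set `A` if it sends no positively oriented
triple of points of `A` to a negatively oriented one, and vice versa. -/
def MonotoneCircOn (f : UnitAddCircle → UnitAddCircle) (A : Set UnitAddCircle) : Prop :=
  ∀ a ∈ A, ∀ b ∈ A, ∀ c ∈ A,
    (PosOriented a b c → ¬ NegOriented (f a) (f b) (f c)) ∧
    (NegOriented a b c → ¬ PosOriented (f a) (f b) (f c))

/-- The group of self-homeomorphisms of the circle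
(multiplication is composition: `f * g` applies `g` first). -/
noncomputable instance : Group (UnitAddCircle ≃ₜ UnitAddCircle) where
  mul f g := g.trans f
  one := Homeomorph.refl _
  inv := Homeomorph.symm
  mul_assoc f g h := Homeomorph.ext fun _ => rfl
  one_mul f := Homeomorph.ext fun _ => rfl
  mul_one f := Homeomorph.ext fun _ => rfl
  inv_mul_cancel f := Homeomorph.ext fun x => f.symm_apply_apply x

namespace PPAux

lemma coe_eq_iff {x y : ℝ} : (x : UnitAddCircle) = (y : UnitAddCircle) ↔ ∃ k : ℤ, y = x + k := by
  constructor
  · intro h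
    have h2 : x - y ∈ AddSubgroup.zmultiples (1:ℝ) := QuotientAddGroup.eq_iff_sub_mem.mp h
    obtain ⟨k, hk⟩ := AddSubgroup.mem_zmultiples_iff.mp h2
    rw [zsmul_eq_mul, mul_one] at hk
    exact ⟨-k, by push_cast; linarith⟩
  · rintro ⟨k, rfl⟩
    apply QuotientAddGroup.eq_iff_sub_mem.mpr
    exact AddSubgroup.mem_zmultiples_iff.mpr ⟨-k, by rw [zsmul_eq_mul, mul_one]; push_cast; ring⟩

lemma coe_add_int (x : ℝ) (k : ℤ) : ((x + (k:ℝ) : ℝ) : UnitAddCircle) = x :=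
  (coe_eq_iff.mpr ⟨k, rfl⟩).symm

lemma coe_surj (w : UnitAddCircle) : ∃ s : ℝ, (s : UnitAddCircle) = w :=
  QuotientAddGroup.mk_surjective w

lemma rep_unique {c t t' : ℝ} (h : (t : UnitAddCircle) = t')
    (h1 : t ∈ Set.Ioo c (c+1)) (h2 : t' ∈ Set.Ioo c (c+1)) : t = t' := by
  obtain ⟨k, hk⟩ := coe_eq_iff.mp h
  have hk0 : k = 0 := by
    have a1 : (k:ℝ) < 1 := by rw [show (k:ℝ) = t' - t by linarith]; linarith [h1.1, h2.2]
    have a2 : (-1:ℝ) < k := by rw [show (k:ℝ) = t' - t by linarith]; linarith [h1.2, h2.1]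
    have b1 : k < 1 := by exact_mod_cast a1
    have b2 : -1 < k := by exact_mod_cast a2
    omega
  rw [hk0] at hk; push_cast at hk; linarith

lemma pos_of_reps {x y z : ℝ} (h1 : x < y) (h2 : y < z) (h3 : z < x + 1) :
    PosOriented ↑x ↑y ↑z := ⟨x, y, z, rfl, rfl, rfl, h1, h2, h3⟩

lemma no_int_between {x y : ℝ} (h : (x : UnitAddCircle) = y) (h1 : x < y) (h2 : y < x + 1) :
    False := by
  obtain ⟨k, hk⟩ := coe_eq_iff.mp h
  have b1 : (0:ℝ) < k := by linarith
  have b2 : (k:ℝ) < 1 := by linarith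
  have c1 : 0 < k := by exact_mod_cast b1
  have c2 : k < 1 := by exact_mod_cast b2
  omega

lemma pos_distinct {a b c : UnitAddCircle} (h : PosOriented a b c) :
    a ≠ b ∧ b ≠ c ∧ a ≠ c := by
  obtain ⟨x, y, z, hx, hy, hz, l1, l2, l3⟩ := h
  refine ⟨?_, ?_, ?_⟩
  · rintro rfl; exact no_int_between (hx.trans hy.symm) l1 (by linarith)
  · rintro rfl; exact no_int_between (hy.trans hz.symm) l2 (by linarith)
  · rintro rfl; exact no_int_between (hx.trans hz.symm) (lt_trans l1 l2) l3

lemma pos_not_neg {a b c : UnitAddCircle} (h : PosOriented a b c) (h' : PosOriented c b a) :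
    False := by
  obtain ⟨x, y, z, hx, hy, hz, l1, l2, l3⟩ := h
  obtain ⟨z', y', x', hz', hy', hx', m1, m2, m3⟩ := h'
  obtain ⟨k1, hk1⟩ := coe_eq_iff.mp (hx.trans hx'.symm)
  obtain ⟨k2, hk2⟩ := coe_eq_iff.mp (hy.trans hy'.symm)
  obtain ⟨k3, hk3⟩ := coe_eq_iff.mp (hz.trans hz'.symm)
  have e1 : k2 - k1 = -1 := by
    have a1 : ((k2 - k1 : ℤ):ℝ) < 0 := by push_cast; linarith
    have a2 : (-2:ℝ) < ((k2 - k1 : ℤ):ℝ) := by push_cast; linarith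
    have b1 : k2 - k1 < 0 := by exact_mod_cast a1
    have b2 : -2 < k2 - k1 := by exact_mod_cast a2
    omega
  have e2 : k3 - k2 = -1 := by
    have a1 : ((k3 - k2 : ℤ):ℝ) < 0 := by push_cast; linarith
    have a2 : (-2:ℝ) < ((k3 - k2 : ℤ):ℝ) := by push_cast; linarith
    have b1 : k3 - k2 < 0 := by exact_mod_cast a1
    have b2 : -2 < k3 - k2 := by exact_mod_cast a2
    omega
  have e3 : k3 - k1 = -1 := by
    have a1 : ((k3 - k1 : ℤ):ℝ) < 0 := by push_cast; linarith
    have a2 : (-2:ℝ) < ((k3 - k1 : ℤ):ℝ) := by push_cast; linarith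
    have b1 : k3 - k1 < 0 := by exact_mod_cast a1
    have b2 : -2 < k3 - k1 := by exact_mod_cast a2
    omega
  omega

lemma exists_rep_Ioo {x : ℝ} {b : UnitAddCircle} (h : b ≠ ↑x) :
    ∃ t : ℝ, x < t ∧ t < x + 1 ∧ (t : UnitAddCircle) = b := by
  obtain ⟨s, hs⟩ := coe_surj b
  refine ⟨s + (⌈x - s⌉ : ℝ), ?_, ?_, ?_⟩
  · rcases lt_or_eq_of_le (by linarith [Int.le_ceil (x - s)] : x ≤ s + (⌈x - s⌉:ℝ)) with h' | h'
    · exact h'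
    · exfalso; exact h (by rw [h', coe_add_int, hs])
  · linarith [Int.ceil_lt_add_one (x - s)]
  · rw [coe_add_int]; exact hs

lemma pos_or_neg {a b c : UnitAddCircle} (hab : a ≠ b) (hbc : b ≠ c) (hac : a ≠ c) :
    PosOriented a b c ∨ PosOriented c b a := by
  obtain ⟨x, hx⟩ := coe_surj a
  obtain ⟨y, hy1, hy2, hy3⟩ := exists_rep_Ioo (x := x) (b := b) (by rw [hx]; exact hab.symm)
  obtain ⟨z, hz1, hz2, hz3⟩ := exists_rep_Ioo (x := x) (b := c) (by rw [hx]; exact hac.symm)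
  rcases lt_trichotomy y z with h | h | h
  · left; exact ⟨x, y, z, hx, hy3, hz3, hy1, h, hz2⟩
  · exfalso; exact hbc (by rw [← hy3, ← hz3, h])
  · right
    refine ⟨z, y, x + 1, hz3, hy3, ?_, h, hy2, by linarith⟩
    rw [show ((x:ℝ) + 1 : ℝ) = x + ((1:ℤ):ℝ) by push_cast; ring, coe_add_int]; exact hx

lemma op_symm {h : UnitAddCircle ≃ₜ UnitAddCircle} (hOP : OrientationPreserving h) :
    OrientationPreserving h.symm := by
  intro a b c hpos
  obtain ⟨hab, hbc, hac⟩ := pos_distinct hpos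
  have d1 : h.symm a ≠ h.symm b := fun e => hab (by simpa using congrArg h e)
  have d2 : h.symm b ≠ h.symm c := fun e => hbc (by simpa using congrArg h e)
  have d3 : h.symm a ≠ h.symm c := fun e => hac (by simpa using congrArg h e)
  rcases pos_or_neg d1 d2 d3 with hp | hn
  · exact hp
  · exfalso
    have := hOP _ _ _ hn
    simp only [Homeomorph.apply_symm_apply] at this
    exact pos_not_neg hpos this

lemma mem_arc {u t v : ℝ} (h1 : u < t) (h2 : t < v) (h3 : v < u + 1) :
    (↑t : UnitAddCircle) ∈ Arc ↑u ↑v := pos_of_reps h1 h2 h3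

lemma mem_arc_rep {u v : ℝ} (hu : u < v) (hv : v < u + 1) {w : UnitAddCircle}
    (hw : w ∈ Arc ↑u ↑v) : ∃ t : ℝ, u < t ∧ t < v ∧ (t : UnitAddCircle) = w := by
  obtain ⟨x, y, z, hx, hy, hz, l1, l2, l3⟩ := hw
  obtain ⟨k, hk⟩ := coe_eq_iff.mp hx
  refine ⟨y + k, by linarith, ?_, by rw [coe_add_int]; exact hy⟩
  have hz' : ((z + (k:ℝ) : ℝ) : UnitAddCircle) = ↑v := by rw [coe_add_int]; exact hz
  have : z + (k:ℝ) = v := rep_unique hz'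
    ⟨by linarith, by linarith⟩ ⟨hu, hv⟩
  linarith

lemma arc_open (a b : UnitAddCircle) : IsOpen (Arc a b) := by
  have him : Arc a b = ((↑·) : ℝ → UnitAddCircle) ''
      {t : ℝ | ∃ x z : ℝ, (x : UnitAddCircle) = a ∧ (z : UnitAddCircle) = b ∧
        x < t ∧ t < z ∧ z < x + 1} := by
    ext w
    constructor
    · rintro ⟨x, y, z, hx, hy, hz, l1, l2, l3⟩
      exact ⟨y, ⟨x, z, hx, hz, l1, l2, l3⟩, hy⟩
    · rintro ⟨t, ⟨x, z, hx, hz, l1, l2, l3⟩, ht⟩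
      exact ⟨x, t, z, hx, ht, hz, l1, l2, l3⟩
  rw [him]
  apply QuotientAddGroup.isOpenMap_coe
  rw [isOpen_iff_mem_nhds]
  rintro t ⟨x, z, hx, hz, l1, l2, l3⟩
  exact Filter.mem_of_superset (Ioo_mem_nhds l1 l2)
    (fun s hs => ⟨x, z, hx, hz, hs.1, hs.2, l3⟩)

lemma fix_endpoints {h : UnitAddCircle ≃ₜ UnitAddCircle} (hOP : OrientationPreserving h)
    {K : Set UnitAddCircle} (hK : ∀ q ∈ K, h q ∈ K) (hK' : ∀ q ∈ K, h.symm q ∈ K)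
    {u x v : ℝ} (h1 : u < x) (h2 : x < v) (h3 : v < u + 1)
    (hfix : h ↑x = ↑x) (huK : (↑u : UnitAddCircle) ∈ K) (hvK : (↑v : UnitAddCircle) ∈ K)
    (hgap : ∀ t : ℝ, u < t → t < v → (↑t : UnitAddCircle) ∉ K) :
    h ↑u = ↑u ∧ h ↑v = ↑v := by
  have hsymmOP := op_symm hOP
  have hBK : ∀ w ∈ Arc (h ↑u) (h ↑v), w ∉ K := by
    intro w hw hwK
    have hw' : h.symm w ∈ Arc ↑u ↑v := by
      have := hsymmOP _ _ _ hw
      simp only [Homeomorph.symm_apply_apply] at this; exact this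
    obtain ⟨t, ht1, ht2, ht3⟩ := mem_arc_rep (lt_trans h1 h2) h3 hw'
    exact hgap t ht1 ht2 (ht3 ▸ hK' w hwK)
  have hxB : (↑x : UnitAddCircle) ∈ Arc (h ↑u) (h ↑v) := by
    have := hOP _ _ _ (mem_arc h1 h2 h3)
    rwa [hfix] at this
  obtain ⟨u₁', x₁, v₁', e1, e2, e3, l1, l2, l3⟩ := hxB
  obtain ⟨k, hk⟩ := coe_eq_iff.mp e2
  have eu : ((u₁' + (k:ℝ) : ℝ) : UnitAddCircle) = h ↑u := by rw [coe_add_int]; exact e1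
  have ev : ((v₁' + (k:ℝ) : ℝ) : UnitAddCircle) = h ↑v := by rw [coe_add_int]; exact e3
  set u₁ := u₁' + (k:ℝ) with hu₁def
  set v₁ := v₁' + (k:ℝ) with hv₁def
  have l1' : u₁ < x := by rw [hu₁def]; linarith
  have l2' : x < v₁ := by rw [hv₁def]; linarith
  have l3' : v₁ < u₁ + 1 := by rw [hu₁def, hv₁def]; linarith
  have hu₁ : u₁ = u := by
    rcases lt_trichotomy u₁ u with hlt | he | hgt
    · exact absurd huK (hBK ↑u ⟨u₁, u, v₁, eu, rfl, ev, hlt, lt_trans h1 l2', l3'⟩)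
    · exact he
    · exact absurd (eu ▸ hK _ huK) (hgap u₁ hgt (lt_trans l1' h2))
  have hv₁ : v₁ = v := by
    rcases lt_trichotomy v₁ v with hlt | he | hgt
    · exact absurd (ev ▸ hK _ hvK) (hgap v₁ (lt_trans h1 l2') hlt)
    · exact he
    · exact absurd hvK (hBK ↑v ⟨u₁, v, v₁, eu, rfl, ev, lt_trans l1' h2, hgt, l3'⟩)
  constructor
  · rw [← eu, hu₁]
  · rw [← ev, hv₁]

end PPAux

theorem ping_pong_into_interval
    (α β : UnitAddCircle ≃ₜ UnitAddCircle)
    (hαOP : OrientationPreserving α) (hβOP : OrientationPreserving β)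
    (hαfin : (FixSet α).Finite) (hβfin : (FixSet β).Finite)
    (hαne : (FixSet α).Nonempty) (hβne : (FixSet β).Nonempty)
    (hdisj : Disjoint (FixSet α) (FixSet β))
    (hαss : ∀ x ∈ FixSet α, IsAttractingFix α x ∨ IsRepellingFix α x)
    (hβss : ∀ x ∈ FixSet β, IsAttractingFix β x ∨ IsRepellingFix β x)
    (p : UnitAddCircle) (a b : UnitAddCircle) (I : Set UnitAddCircle)
    (hI : I = Arc a b) (hIne : I.Nonempty)
    (hIα : ∃ x ∈ FixSet α, x ∈ I) (hIβ : ∃ x ∈ FixSet β, x ∈ I) :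
    ∃ g ∈ Subgroup.closure ({α, β} : Set (UnitAddCircle ≃ₜ UnitAddCircle)), g p ∈ I := by
  classical
  subst hI
  by_contra hcon
  push_neg at hcon
  set c := Subgroup.closure ({α, β} : Set (UnitAddCircle ≃ₜ UnitAddCircle)) with hc
  have hαc : α ∈ c := Subgroup.subset_closure (Set.mem_insert _ _)
  have hβc : β ∈ c := Subgroup.subset_closure (by simp)
  -- the complement of the union of preimages of I
  set K : Set UnitAddCircle := {q | ∀ g ∈ c, g q ∉ Arc a b} with hKdef
  have hpK : p ∈ K := hcon
  have hKinv : ∀ g ∈ c, ∀ q ∈ K, g q ∈ K := by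
    intro g hg q hq g' hg'
    have h2 : (g' * g) q ∉ Arc a b := hq _ (mul_mem hg' hg)
    exact h2
  have hIK : ∀ q ∈ Arc a b, q ∉ K := by
    intro q hq hqK
    exact hqK 1 (one_mem c) hq
  have hKα : ∀ q ∈ K, α q ∈ K := hKinv α hαc
  have hKβ : ∀ q ∈ K, β q ∈ K := hKinv β hβc
  have hKαs : ∀ q ∈ K, α.symm q ∈ K := hKinv α⁻¹ (inv_mem hαc)
  have hKβs : ∀ q ∈ K, β.symm q ∈ K := hKinv β⁻¹ (inv_mem hβc)
  -- the preimage of K in ℝ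
  set Kt : Set ℝ := {t : ℝ | (↑t : UnitAddCircle) ∈ K} with hKtdef
  have hKtclosed : IsClosed Kt := by
    have : Kt = ⋂ g : {g // g ∈ c}, (fun t : ℝ => (g : UnitAddCircle ≃ₜ UnitAddCircle) (↑t : UnitAddCircle)) ⁻¹' (Arc a b)ᶜ := by
      ext t
      simp only [hKtdef, Set.mem_setOf_eq, Set.mem_iInter, Set.mem_preimage, Set.mem_compl_iff]
      exact ⟨fun h g => h g g.2, fun h g hg => h ⟨g, hg⟩⟩
    rw [this]
    refine isClosed_iInter fun g => IsClosed.preimage ?_ (PPAux.arc_open a b).isClosed_compl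
    exact (g : UnitAddCircle ≃ₜ UnitAddCircle).continuous.comp (AddCircle.continuous_mk' 1)
  have hKtshift : ∀ t ∈ Kt, ∀ k : ℤ, t + (k:ℝ) ∈ Kt := by
    intro t ht k
    show ((t + (k:ℝ) : ℝ) : UnitAddCircle) ∈ K
    rw [PPAux.coe_add_int]
    exact ht
  -- fixed points of α and β inside the arc
  obtain ⟨x₀, hx₀fix, hx₀I⟩ := hIα
  obtain ⟨y₀, hy₀fix, hy₀I⟩ := hIβ
  -- representatives: x₀ ∈ Arc a b
  obtain ⟨at_, xt, bt, hat, hxt, hbt, j1, j2, j3⟩ := hx₀I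
  have hJK : ∀ t : ℝ, at_ < t → t < bt → t ∉ Kt := by
    intro t h1 h2 ht
    exact hIK _ (by rw [← hat, ← hbt]; exact PPAux.mem_arc h1 h2 j3) ht
  have hxtK : xt ∉ Kt := hJK xt j1 j2
  -- lift of p
  obtain ⟨pt, hpt⟩ := PPAux.coe_surj p
  have hptK : pt ∈ Kt := by show (↑pt : UnitAddCircle) ∈ K; rw [hpt]; exact hpK
  -- v : first point of Kt at or after xt
  set A : Set ℝ := Kt ∩ Set.Ici xt with hAdef
  have hAne : A.Nonempty := by
    refine ⟨pt + (⌈xt - pt⌉ : ℝ), hKtshift pt hptK _, ?_⟩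
    simp only [Set.mem_Ici]
    linarith [Int.le_ceil (xt - pt)]
  have hAbdd : BddBelow A := ⟨xt, fun t ht => ht.2⟩
  have hAclosed : IsClosed A := hKtclosed.inter isClosed_Ici
  set v := sInf A with hvdef
  have hvA : v ∈ A := hAclosed.csInf_mem hAne hAbdd
  have hvx : xt < v := lt_of_le_of_ne hvA.2 (fun e => hxtK (e ▸ hvA.1))
  have hv1 : v < xt + 1 := by
    have h2 : v ≤ pt + (⌈xt - pt⌉ : ℝ) := csInf_le hAbdd
      ⟨hKtshift pt hptK _, by simp only [Set.mem_Ici]; linarith [Int.le_ceil (xt - pt)]⟩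
    linarith [Int.ceil_lt_add_one (xt - pt)]
  -- u : last point of Kt at or before xt (within [v-1, xt])
  set B : Set ℝ := Kt ∩ Set.Icc (v - 1) xt with hBdef
  have hBne : B.Nonempty := by
    refine ⟨v - 1, ?_, le_refl _, by linarith⟩
    have := hKtshift v hvA.1 (-1)
    simpa [sub_eq_add_neg] using this
  have hBbdd : BddAbove B := ⟨xt, fun t ht => ht.2.2⟩
  have hBclosed : IsClosed B := hKtclosed.inter isClosed_Icc
  set u := sSup B with hudef
  have huB : u ∈ B := hBclosed.csSup_mem hBne hBbdd
  have hux : u < xt := lt_of_le_of_ne huB.2.2 (fun e => hxtK (e ▸ huB.1))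
  have huv : v - 1 ≤ u := huB.2.1
  -- the gap: no points of Kt strictly between u and v
  have hgap : ∀ t : ℝ, u < t → t < v → t ∉ Kt := by
    intro t h1 h2 ht
    rcases le_total t xt with h | h
    · have : t ≤ u := le_csSup hBbdd ⟨ht, by linarith, h⟩
      linarith
    · have : v ≤ t := csInf_le hAbdd ⟨ht, h⟩
      linarith
  have hgapK : ∀ t : ℝ, u < t → t < v → (↑t : UnitAddCircle) ∉ K := hgap
  have huK : (↑u : UnitAddCircle) ∈ K := huB.1
  have hvK : (↑v : UnitAddCircle) ∈ K := hvA.1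
  rcases eq_or_lt_of_le (by linarith : v ≤ u + 1) with heq | hlt
  · -- degenerate case : K is a single point, fixed by both α and β
    have hKsingle : ∀ w ∈ K, w = (↑v : UnitAddCircle) := by
      intro w hw
      obtain ⟨s, hs⟩ := PPAux.coe_surj w
      set t := s + ((⌊u - s⌋ + 1 : ℤ) : ℝ) with htdef
      have htK : t ∈ Kt := hKtshift s (by show (↑s : UnitAddCircle) ∈ K; rw [hs]; exact hw) _
      have ht1 : u < t := by
        rw [htdef]; push_cast
        linarith [Int.lt_floor_add_one (u - s)]
      have ht2 : t ≤ u + 1 := by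
        rw [htdef]; push_cast
        linarith [Int.floor_le (u - s)]
      have ht3 : t = v := by
        rcases lt_or_eq_of_le ht2 with h' | h'
        · exact absurd htK (hgap t ht1 (by linarith))
        · rw [h', ← heq]
      rw [← hs, ← ht3, htdef, PPAux.coe_add_int]
    have hαv : α (↑v : UnitAddCircle) = ↑v := hKsingle _ (hKα _ hvK)
    have hβv : β (↑v : UnitAddCircle) = ↑v := hKsingle _ (hKβ _ hvK)
    exact Set.disjoint_left.mp hdisj hαv hβv
  · -- main case : the gap arc (u,v) has distinct endpoints and contains x₀ and y₀
    obtain ⟨yt, hy1, hy2, hy3⟩ := PPAux.mem_arc_rep (u := at_) (v := bt)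
      (by linarith) j3 (by rw [hat, hbt]; exact hy₀I)
    have hyv : yt < v := by
      by_contra hcon2
      push_neg at hcon2
      exact hJK v (by linarith) (by linarith) hvA.1
    have huy : u < yt := by
      by_contra hcon2
      push_neg at hcon2
      exact hJK u (by linarith) (by linarith) huB.1
    have hαfx : α (↑xt : UnitAddCircle) = ↑xt := by rw [hxt]; exact hx₀fix
    have hβfy : β (↑yt : UnitAddCircle) = ↑yt := by rw [hy3]; exact hy₀fix
    have hfixα := PPAux.fix_endpoints hαOP hKα hKαs hux hvx hlt hαfx huK hvK hgapK
    have hfixβ := PPAux.fix_endpoints hβOP hKβ hKβs huy hyv hlt hβfy huK hvK hgapK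
    exact Set.disjoint_left.mp hdisj hfixα.1 hfixβ.1
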